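/- arXiv:2208.05831 — 2 statements merged into one kernel-verified Lean document; each statement's English description precedes it below -/
import Mathlib

section
/- For all integers a, i with 1 ≤ a < i ≤ N, one has e_i f_{a,i+1} - f_{a,i+1} e_i = -q^{-1} f_{a,i} k_i^{-2} in U. -/
noncomputable section

open FreeAlgebra

/-- `𝕜 = F(q)`, the field of rational functions over `F`. -/
abbrev kk (F : Type) [Field F] : Type := RatFunc F

/-- The variable `q`. -/
def qq (F : Type) [Field F] : kk F := RatFunc.X

/-- `v = q²`. -/
def vv (F : Type) [Field F] : kk F := qq F ^ 2

/-- The balanced quantum integer `[n]_v`. -/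
def qint (F : Type) [Field F] (n : ℤ) : kk F :=
  (vv F ^ n - vv F ^ (-n)) / (vv F - (vv F)⁻¹)

/-- The quantum factorial `[m]_v!`. -/
def qfact (F : Type) [Field F] (m : ℕ) : kk F :=
  ∏ j ∈ Finset.Icc 1 m, qint F j

/-- The balanced Gaussian binomial coefficient `C(n,i)_v`. -/
def qbinom (F : Type) [Field F] (n i : ℕ) : kk F :=
  qfact F n / (qfact F i * qfact F (n - i))

/-- The Cartan matrix of `sl(N+1)`, with 1-based indices. -/
def cartan (i j : ℕ) : ℤ :=
  if i = j then 2 else if i + 1 = j ∨ j + 1 = i then -1 else 0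

/-- Generators of `U_q(sl(N+1))`: `e i`, `f i`, `k i`, `kinv i` (0-based `i : Fin N`,
corresponding to the 1-based index `i+1`). -/
inductive Gen (N : ℕ) : Type
  | e : Fin N → Gen N
  | f : Fin N → Gen N
  | k : Fin N → Gen N
  | kinv : Fin N → Gen N

/-- The defining relations of `U_q(sl(N+1))`. -/
inductive UqRel (F : Type) [Field F] (N : ℕ) :
    FreeAlgebra (kk F) (Gen N) → FreeAlgebra (kk F) (Gen N) → Prop
  | kkinv (i : Fin N) : UqRel F N (ι (kk F) (Gen.k i) * ι (kk F) (Gen.kinv i)) 1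
  | kinvk (i : Fin N) : UqRel F N (ι (kk F) (Gen.kinv i) * ι (kk F) (Gen.k i)) 1
  | kcomm (i j : Fin N) :
      UqRel F N (ι (kk F) (Gen.k i) * ι (kk F) (Gen.k j))
        (ι (kk F) (Gen.k j) * ι (kk F) (Gen.k i))
  | ke (i j : Fin N) :
      UqRel F N (ι (kk F) (Gen.k i) * ι (kk F) (Gen.e j) * ι (kk F) (Gen.kinv i))
        ((qq F ^ cartan ((i : ℕ) + 1) ((j : ℕ) + 1)) • ι (kk F) (Gen.e j))
  | kf (i j : Fin N) :
      UqRel F N (ι (kk F) (Gen.k i) * ι (kk F) (Gen.f j) * ι (kk F) (Gen.kinv i))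
        ((qq F ^ (-cartan ((i : ℕ) + 1) ((j : ℕ) + 1))) • ι (kk F) (Gen.f j))
  | ef (i j : Fin N) :
      UqRel F N (ι (kk F) (Gen.e i) * ι (kk F) (Gen.f j) - ι (kk F) (Gen.f j) * ι (kk F) (Gen.e i))
        (if i = j then
          ((qq F ^ 2 - qq F ^ (-2 : ℤ))⁻¹) •
            ((ι (kk F) (Gen.k i)) ^ 2 - (ι (kk F) (Gen.kinv i)) ^ 2)
        else 0)
  | serre_e_near (i j : Fin N) (h : (i : ℕ) + 1 = j ∨ (j : ℕ) + 1 = i) :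
      UqRel F N
        ((ι (kk F) (Gen.e i)) ^ 2 * ι (kk F) (Gen.e j)
          - (qq F ^ 2 + qq F ^ (-2 : ℤ)) •
              (ι (kk F) (Gen.e i) * ι (kk F) (Gen.e j) * ι (kk F) (Gen.e i))
          + ι (kk F) (Gen.e j) * (ι (kk F) (Gen.e i)) ^ 2) 0
  | serre_f_near (i j : Fin N) (h : (i : ℕ) + 1 = j ∨ (j : ℕ) + 1 = i) :
      UqRel F N
        ((ι (kk F) (Gen.f i)) ^ 2 * ι (kk F) (Gen.f j)
          - (qq F ^ 2 + qq F ^ (-2 : ℤ)) •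
              (ι (kk F) (Gen.f i) * ι (kk F) (Gen.f j) * ι (kk F) (Gen.f i))
          + ι (kk F) (Gen.f j) * (ι (kk F) (Gen.f i)) ^ 2) 0
  | serre_e_far (i j : Fin N) (h : (i : ℕ) + 1 < j ∨ (j : ℕ) + 1 < i) :
      UqRel F N (ι (kk F) (Gen.e i) * ι (kk F) (Gen.e j))
        (ι (kk F) (Gen.e j) * ι (kk F) (Gen.e i))
  | serre_f_far (i j : Fin N) (h : (i : ℕ) + 1 < j ∨ (j : ℕ) + 1 < i) :
      UqRel F N (ι (kk F) (Gen.f i) * ι (kk F) (Gen.f j))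
        (ι (kk F) (Gen.f j) * ι (kk F) (Gen.f i))

/-- The quantized enveloping algebra `U = U_q(sl(N+1))`. -/
abbrev Uq (F : Type) [Field F] (N : ℕ) : Type := RingQuot (UqRel F N)

variable (F : Type) [Field F] (N : ℕ)

/-- The image of a generator in `U`. -/
def gen (g : Gen N) : Uq F N := RingQuot.mkAlgHom (kk F) (UqRel F N) (ι (kk F) g)

/-- `e_i` (1-based index `1 ≤ i ≤ N`; junk value `0` outside this range). -/
def egen (i : ℕ) : Uq F N :=
  if h : 1 ≤ i ∧ i ≤ N then gen F N (Gen.e ⟨i - 1, by omega⟩) else 0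

/-- `f_i` (1-based index). -/
def fgen (i : ℕ) : Uq F N :=
  if h : 1 ≤ i ∧ i ≤ N then gen F N (Gen.f ⟨i - 1, by omega⟩) else 0

/-- `k_i` (1-based index). -/
def kgen (i : ℕ) : Uq F N :=
  if h : 1 ≤ i ∧ i ≤ N then gen F N (Gen.k ⟨i - 1, by omega⟩) else 0

/-- `k_i⁻¹` (1-based index). -/
def kinvgen (i : ℕ) : Uq F N :=
  if h : 1 ≤ i ∧ i ≤ N then gen F N (Gen.kinv ⟨i - 1, by omega⟩) else 0

/-- Auxiliary recursion: `fword i d = f_{i, i+1+d}`. -/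
def fword (i : ℕ) : ℕ → Uq F N
  | 0 => fgen F N i
  | d + 1 =>
      qq F • (fword i d * fgen F N (i + 1 + d)) -
        (qq F)⁻¹ • (fgen F N (i + 1 + d) * fword i d)

/-- The quantum root vector `f_{i,j}` (for `1 ≤ i < j ≤ N+1`). -/
def fij (i j : ℕ) : Uq F N := fword F N i (j - i - 1)

/-- Product of `f_{a,b}` over successive entries of a list. -/
def fList : List ℕ → Uq F N
  | a :: b :: rest => fij F N a b * fList (b :: rest)
  | _ => 1

/-- `f_S` for a finite set `S` of indices. -/
def fSet (S : Finset ℕ) : Uq F N := fList F N (S.sort (· ≤ ·))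

/-- The index set `𝕀` of subsets of `{1,…,N+1}` containing `1` and `N+1`. -/
def II : Finset (Finset ℕ) :=
  (Finset.Icc 1 (N + 1)).powerset.filter fun I => 1 ∈ I ∧ N + 1 ∈ I

/-- `r(I) = {s - 1 : s ∈ {1,…,N+1} \ I}`. -/
def rSet (I : Finset ℕ) : Finset ℕ := (Finset.Icc 1 (N + 1) \ I).image (· - 1)

/-- `k_{σ_i} = k_1 ⋯ k_i`. -/
def kσ (i : ℕ) : Uq F N := ((List.range i).map fun j => kgen F N (j + 1)).prod

/-- `K_{σ_i} = k_{σ_i}²`. -/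
def Kσ (i : ℕ) : Uq F N := kσ F N i ^ 2

/-- `k_{σ_i}⁻¹ = k_1⁻¹ ⋯ k_i⁻¹`. -/
def kσinv (i : ℕ) : Uq F N := ((List.range i).map fun j => kinvgen F N (j + 1)).prod

/-- `K_{σ_i}⁻¹`. -/
def KσInv (i : ℕ) : Uq F N := kσinv F N i ^ 2

/-- The element `h_i = -q⁻¹ v^{-(i-1)} K_{σ_i}⁻¹ (K_{σ_i} v^i - K_{σ_i}⁻¹ v^{-i})/(v - v⁻¹) ∈ U`. -/
def hElt (i : ℕ) : Uq F N :=
  (-(qq F)⁻¹ * vv F ^ (1 - (i : ℤ)) * (vv F - (vv F)⁻¹)⁻¹) •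
    (KσInv F N i * (vv F ^ (i : ℤ) • Kσ F N i - vv F ^ (-(i : ℤ)) • KσInv F N i))

/-- `H_I = ∏_{i ∈ r(I)} h_i` (product taken in increasing order of indices). -/
def HI (I : Finset ℕ) : Uq F N := (((rSet N I).sort (· ≤ ·)).map (hElt F N)).prod

/-- A weight `λ` is recorded by its values `(λ, α_j)` for `1 ≤ j ≤ N`;
`pairσ lam i = (λ, σ_i) = (λ, α_1 + ⋯ + α_i)`. -/
def pairσ (lam : ℕ → ℤ) (i : ℕ) : ℤ := ∑ j ∈ Finset.Icc 1 i, lam j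

/-- The scalar `h_i(λ) = -q⁻¹ v^{-((λ,σ_i)+i-1)} [(λ,σ_i)+i]_v`. -/
def hval (lam : ℕ → ℤ) (i : ℕ) : kk F :=
  -(qq F)⁻¹ * vv F ^ (-(pairσ lam i + (i : ℤ) - 1)) * qint F (pairσ lam i + (i : ℤ))

/-- The scalar `H_I(λ) = ∏_{i ∈ r(I)} h_i(λ)`. -/
def HIval (lam : ℕ → ℤ) (I : Finset ℕ) : kk F := ∏ i ∈ rSet N I, hval F lam i

/-- The left ideal `J_λ` of `U` generated by `e_1, …, e_N` and the `k_j - q^{(λ,α_j)}`. -/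
def vermaIdeal (lam : ℕ → ℤ) : Submodule (Uq F N) (Uq F N) :=
  Submodule.span (Uq F N)
    ({x | ∃ j, 1 ≤ j ∧ j ≤ N ∧ x = egen F N j} ∪
      {x | ∃ j, 1 ≤ j ∧ j ≤ N ∧
        x = kgen F N j - algebraMap (kk F) (Uq F N) (qq F ^ lam j)})

/-- The Verma module `M(λ) = U/J_λ`. -/
abbrev Verma (lam : ℕ → ℤ) : Type := Uq F N ⧸ vermaIdeal F N lam

/-- The highest weight vector `v_λ`, the image of `1` in `M(λ)`. -/
def hw (lam : ℕ → ℤ) : Verma F N lam := Submodule.Quotient.mk 1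

/-- The candidate Shapovalov element `Θ_η = Σ_{I ∈ 𝕀} f_I H_I`. -/
def Theta : Uq F N := ∑ I ∈ II N, fSet F N I * HI F N I

/-- `D^n(λ)`: the `(n-1) × (n-1)` matrix over `U` with `(i,j)` entry (1-based)
`f_{i,j+1}` if `i ≤ j`, `-h_j(λ)·1` if `i = j+1`, and `0` otherwise. -/
def Dmat (lam : ℕ → ℤ) (n : ℕ) : Matrix (Fin (n - 1)) (Fin (n - 1)) (Uq F N) :=
  Matrix.of fun i j =>
    if (i : ℕ) ≤ (j : ℕ) then fij F N ((i : ℕ) + 1) ((j : ℕ) + 2)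
    else if (i : ℕ) = (j : ℕ) + 1 then
      -(algebraMap (kk F) (Uq F N) (hval F lam ((j : ℕ) + 1)))
    else 0

/-- The left-to-right determinant of a matrix with noncommutative entries. -/
def ldet {m : ℕ} (B : Matrix (Fin m) (Fin m) (Uq F N)) : Uq F N :=
  ∑ w : Equiv.Perm (Fin m),
    ((Equiv.Perm.sign w : ℤˣ) : ℤ) • ((List.finRange m).map fun j => B (w j) j).prod

end

section Aux

variable (F : Type) [Field F] (N : ℕ)

lemma qne : qq F ≠ 0 := RatFunc.X_ne_zero

lemma q4ne : (qq F) ^ 4 ≠ 1 := by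
  intro h
  have h2 : (algebraMap (Polynomial F) (RatFunc F)) (Polynomial.X ^ 4) =
      (algebraMap (Polynomial F) (RatFunc F)) 1 := by
    simpa [qq, map_pow] using h
  have h3 := RatFunc.algebraMap_injective F h2
  have := congrArg Polynomial.natDegree h3
  simp [Polynomial.natDegree_X_pow] at this

lemma qden_ne : qq F ^ 2 - (qq F ^ 2)⁻¹ ≠ 0 := by
  intro h
  apply q4ne F
  have hq2 : (qq F) ^ 2 ≠ 0 := pow_ne_zero _ (qne F)
  have h1 : qq F ^ 2 = (qq F ^ 2)⁻¹ := sub_eq_zero.mp h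
  have h2 : qq F ^ 2 * qq F ^ 2 = 1 := by
    nth_rewrite 2 [h1]
    exact mul_inv_cancel₀ hq2
  calc qq F ^ 4 = qq F ^ 2 * qq F ^ 2 := by ring
  _ = 1 := h2

lemma zpow_m2 : qq F ^ (-2 : ℤ) = (qq F ^ 2)⁻¹ := by
  rw [zpow_neg]; norm_cast

-- relations at the Fin level
lemma gen_kinvk (i : Fin N) : gen F N (Gen.kinv i) * gen F N (Gen.k i) = 1 := by
  have h := RingQuot.mkAlgHom_rel (kk F) (UqRel.kinvk (F := F) (N := N) i)
  simpa [gen, map_mul, map_one] using h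

lemma gen_kkinv (i : Fin N) : gen F N (Gen.k i) * gen F N (Gen.kinv i) = 1 := by
  have h := RingQuot.mkAlgHom_rel (kk F) (UqRel.kkinv (F := F) (N := N) i)
  simpa [gen, map_mul, map_one] using h

lemma k_mul_f_fin (i j : Fin N) :
    gen F N (Gen.k i) * gen F N (Gen.f j) =
      (qq F ^ (-cartan ((i : ℕ) + 1) ((j : ℕ) + 1))) • (gen F N (Gen.f j) * gen F N (Gen.k i)) := by
  have h := RingQuot.mkAlgHom_rel (kk F) (UqRel.kf (F := F) (N := N) i j)
  replace h : gen F N (Gen.k i) * gen F N (Gen.f j) * gen F N (Gen.kinv i) =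
      (qq F ^ (-cartan ((i : ℕ) + 1) ((j : ℕ) + 1))) • gen F N (Gen.f j) := by
    simpa [gen, map_mul, map_smul] using h
  calc gen F N (Gen.k i) * gen F N (Gen.f j)
      = gen F N (Gen.k i) * gen F N (Gen.f j) * (gen F N (Gen.kinv i) * gen F N (Gen.k i)) := by
        rw [gen_kinvk, mul_one]
    _ = (gen F N (Gen.k i) * gen F N (Gen.f j) * gen F N (Gen.kinv i)) * gen F N (Gen.k i) := by
        rw [← mul_assoc]
    _ = (qq F ^ (-cartan ((i : ℕ) + 1) ((j : ℕ) + 1))) • (gen F N (Gen.f j) * gen F N (Gen.k i)) := by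
        rw [h, smul_mul_assoc]

lemma kinv_mul_f_fin (i j : Fin N) :
    gen F N (Gen.kinv i) * gen F N (Gen.f j) =
      (qq F ^ (cartan ((i : ℕ) + 1) ((j : ℕ) + 1))) • (gen F N (Gen.f j) * gen F N (Gen.kinv i)) := by
  set c : kk F := qq F ^ (-cartan ((i : ℕ) + 1) ((j : ℕ) + 1)) with hc
  have hcne : c ≠ 0 := zpow_ne_zero _ (qne F)
  have h1 : gen F N (Gen.kinv i) * (gen F N (Gen.k i) * gen F N (Gen.f j)) * gen F N (Gen.kinv i) =
      gen F N (Gen.f j) * gen F N (Gen.kinv i) := by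
    have h0 : gen F N (Gen.kinv i) * (gen F N (Gen.k i) * gen F N (Gen.f j)) = gen F N (Gen.f j) := by
      rw [← mul_assoc, gen_kinvk, one_mul]
    rw [h0]
  have h2 : gen F N (Gen.kinv i) * (gen F N (Gen.k i) * gen F N (Gen.f j)) * gen F N (Gen.kinv i) =
      c • (gen F N (Gen.kinv i) * gen F N (Gen.f j)) := by
    rw [k_mul_f_fin, mul_smul_comm, smul_mul_assoc]
    congr 1
    rw [mul_assoc, mul_assoc, gen_kkinv, mul_one]
  have h3 : gen F N (Gen.f j) * gen F N (Gen.kinv i) =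
      c • (gen F N (Gen.kinv i) * gen F N (Gen.f j)) := by rw [← h1, h2]
  have h4 : (qq F ^ (cartan ((i : ℕ) + 1) ((j : ℕ) + 1))) = c⁻¹ := by
    rw [hc, ← zpow_neg, neg_neg]
  rw [h4, h3, smul_smul, inv_mul_cancel₀ hcne, one_smul]

lemma ef_comm_fin (i j : Fin N) (h : i ≠ j) :
    gen F N (Gen.e i) * gen F N (Gen.f j) = gen F N (Gen.f j) * gen F N (Gen.e i) := by
  have h1 := RingQuot.mkAlgHom_rel (kk F) (UqRel.ef (F := F) (N := N) i j)
  rw [if_neg h] at h1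
  have h2 : gen F N (Gen.e i) * gen F N (Gen.f j) - gen F N (Gen.f j) * gen F N (Gen.e i) = 0 := by
    simpa [gen, map_sub, map_mul] using h1
  exact sub_eq_zero.mp h2

lemma ef_same_fin (i : Fin N) :
    gen F N (Gen.e i) * gen F N (Gen.f i) - gen F N (Gen.f i) * gen F N (Gen.e i) =
      ((qq F ^ 2 - qq F ^ (-2 : ℤ))⁻¹) • ((gen F N (Gen.k i)) ^ 2 - (gen F N (Gen.kinv i)) ^ 2) := by
  have h1 := RingQuot.mkAlgHom_rel (kk F) (UqRel.ef (F := F) (N := N) i i)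
  rw [if_pos rfl] at h1
  simpa [gen, map_sub, map_mul, map_smul, map_pow] using h1

end Aux


section Aux2

variable (F : Type) [Field F] (N : ℕ)

lemma k_mul_f' (i j : ℕ) (hi : 1 ≤ i) (hi' : i ≤ N) :
    kgen F N i * fgen F N j = (qq F ^ (-cartan i j)) • (fgen F N j * kgen F N i) := by
  by_cases hj : 1 ≤ j ∧ j ≤ N
  · have e1 : i - 1 + 1 = i := by omega
    have e2 : j - 1 + 1 = j := by omega
    rw [kgen, dif_pos ⟨hi, hi'⟩, fgen, dif_pos hj]
    have := k_mul_f_fin F N ⟨i - 1, by omega⟩ ⟨j - 1, by omega⟩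
    simpa [e1, e2] using this
  · rw [fgen, dif_neg hj]; simp

lemma kinv_mul_f' (i j : ℕ) (hi : 1 ≤ i) (hi' : i ≤ N) :
    kinvgen F N i * fgen F N j = (qq F ^ (cartan i j)) • (fgen F N j * kinvgen F N i) := by
  by_cases hj : 1 ≤ j ∧ j ≤ N
  · have e1 : i - 1 + 1 = i := by omega
    have e2 : j - 1 + 1 = j := by omega
    rw [kinvgen, dif_pos ⟨hi, hi'⟩, fgen, dif_pos hj]
    have := kinv_mul_f_fin F N ⟨i - 1, by omega⟩ ⟨j - 1, by omega⟩
    simpa [e1, e2] using this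
  · rw [fgen, dif_neg hj]; simp

lemma ef_comm' (i j : ℕ) (hi : 1 ≤ i) (hi' : i ≤ N) (hij : i ≠ j) :
    egen F N i * fgen F N j = fgen F N j * egen F N i := by
  by_cases hj : 1 ≤ j ∧ j ≤ N
  · rw [egen, dif_pos ⟨hi, hi'⟩, fgen, dif_pos hj]
    exact ef_comm_fin F N _ _ (by simp [Fin.mk.injEq]; omega)
  · rw [fgen, dif_neg hj]; simp

lemma ef_same' (i : ℕ) (hi : 1 ≤ i) (hi' : i ≤ N) :
    egen F N i * fgen F N i - fgen F N i * egen F N i =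
      ((qq F ^ 2 - qq F ^ (-2 : ℤ))⁻¹) • ((kgen F N i) ^ 2 - (kinvgen F N i) ^ 2) := by
  rw [egen, fgen, kgen, kinvgen, dif_pos ⟨hi, hi'⟩, dif_pos ⟨hi, hi'⟩, dif_pos ⟨hi, hi'⟩,
    dif_pos ⟨hi, hi'⟩]
  exact ef_same_fin F N _

lemma cartan_far (i j : ℕ) (h1 : i ≠ j) (h2 : i + 1 ≠ j) (h3 : j + 1 ≠ i) : cartan i j = 0 := by
  simp only [cartan]
  rw [if_neg h1, if_neg (by tauto)]

lemma cartan_adj (i j : ℕ) (h : j + 1 = i) : cartan i j = -1 := by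
  simp only [cartan]
  rw [if_neg (by omega), if_pos (Or.inr h)]

-- generic commutation helpers
lemma cross (s t : kk F) (x A g : Uq F N) (hA : x * A = s • (A * x)) (hg : x * g = t • (g * x)) :
    x * (A * g) = (s * t) • ((A * g) * x) := by
  calc x * (A * g) = (x * A) * g := (mul_assoc _ _ _).symm
  _ = s • (A * (x * g)) := by rw [hA, smul_mul_assoc, mul_assoc]
  _ = s • (A * (t • (g * x))) := by rw [hg]
  _ = (s * t) • ((A * g) * x) := by rw [mul_smul_comm, smul_smul, ← mul_assoc]

lemma stepmul (s t : kk F) (x A g : Uq F N) (hA : x * A = s • (A * x)) (hg : x * g = t • (g * x)) :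
    x * (qq F • (A * g) - (qq F)⁻¹ • (g * A)) =
      (s * t) • ((qq F • (A * g) - (qq F)⁻¹ • (g * A)) * x) := by
  rw [mul_sub, mul_smul_comm, mul_smul_comm, cross F N s t x A g hA hg,
    cross F N t s x g A hg hA, sub_mul, smul_mul_assoc, smul_mul_assoc, smul_sub,
    smul_smul, smul_smul, smul_smul, smul_smul]
  congr 1
  · rw [mul_comm]
  · rw [mul_comm t s, mul_comm]

lemma e_fword_comm (a d i : ℕ) (hi : 1 ≤ i) (hi' : i ≤ N) (h : a + d < i) :
    egen F N i * fword F N a d = fword F N a d * egen F N i := by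
  induction d with
  | zero => exact ef_comm' F N i a hi hi' (by omega)
  | succ d ih =>
    have h1 : egen F N i * fword F N a d = (1 : kk F) • (fword F N a d * egen F N i) := by
      rw [one_smul]; exact ih (by omega)
    have h2 : egen F N i * fgen F N (a + 1 + d) =
        (1 : kk F) • (fgen F N (a + 1 + d) * egen F N i) := by
      rw [one_smul]; exact ef_comm' F N i (a + 1 + d) hi hi' (by omega)
    have := stepmul F N 1 1 (egen F N i) (fword F N a d) (fgen F N (a + 1 + d)) h1 h2
    simpa [fword] using this

lemma kinv_fword_comm (a d i : ℕ) (hi : 1 ≤ i) (hi' : i ≤ N) (h : a + d + 1 < i) :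
    kinvgen F N i * fword F N a d = fword F N a d * kinvgen F N i := by
  induction d with
  | zero =>
    have := kinv_mul_f' F N i a hi hi'
    rw [cartan_far i a (by omega) (by omega) (by omega)] at this
    simpa [fword] using this
  | succ d ih =>
    have h1 : kinvgen F N i * fword F N a d = (1 : kk F) • (fword F N a d * kinvgen F N i) := by
      rw [one_smul]; exact ih (by omega)
    have h2 : kinvgen F N i * fgen F N (a + 1 + d) =
        (1 : kk F) • (fgen F N (a + 1 + d) * kinvgen F N i) := by
      have := kinv_mul_f' F N i (a + 1 + d) hi hi'
      rw [cartan_far i (a + 1 + d) (by omega) (by omega) (by omega)] at this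
      simpa using this
    have := stepmul F N 1 1 (kinvgen F N i) (fword F N a d) (fgen F N (a + 1 + d)) h1 h2
    simpa [fword] using this

lemma k_fword_comm (a d i : ℕ) (hi : 1 ≤ i) (hi' : i ≤ N) (h : a + d + 1 < i) :
    kgen F N i * fword F N a d = fword F N a d * kgen F N i := by
  induction d with
  | zero =>
    have := k_mul_f' F N i a hi hi'
    rw [cartan_far i a (by omega) (by omega) (by omega)] at this
    simpa [fword] using this
  | succ d ih =>
    have h1 : kgen F N i * fword F N a d = (1 : kk F) • (fword F N a d * kgen F N i) := by
      rw [one_smul]; exact ih (by omega)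
    have h2 : kgen F N i * fgen F N (a + 1 + d) =
        (1 : kk F) • (fgen F N (a + 1 + d) * kgen F N i) := by
      have := k_mul_f' F N i (a + 1 + d) hi hi'
      rw [cartan_far i (a + 1 + d) (by omega) (by omega) (by omega)] at this
      simpa using this
    have := stepmul F N 1 1 (kgen F N i) (fword F N a d) (fgen F N (a + 1 + d)) h1 h2
    simpa [fword] using this

lemma kinv_fword_last (a d i : ℕ) (hi : 1 ≤ i) (hi' : i ≤ N) (h : a + d + 1 = i) :
    kinvgen F N i * fword F N a d = (qq F)⁻¹ • (fword F N a d * kinvgen F N i) := by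
  induction d with
  | zero =>
    have := kinv_mul_f' F N i a hi hi'
    rw [cartan_adj i a (by omega)] at this
    simpa [zpow_neg, fword] using this
  | succ d ih =>
    have h1 : kinvgen F N i * fword F N a d = (1 : kk F) • (fword F N a d * kinvgen F N i) := by
      rw [one_smul]; exact kinv_fword_comm F N a d i hi hi' (by omega)
    have h2 : kinvgen F N i * fgen F N (a + 1 + d) =
        (qq F)⁻¹ • (fgen F N (a + 1 + d) * kinvgen F N i) := by
      have := kinv_mul_f' F N i (a + 1 + d) hi hi'
      rw [cartan_adj i (a + 1 + d) (by omega)] at this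
      simpa [zpow_neg] using this
    have := stepmul F N 1 ((qq F)⁻¹) (kinvgen F N i) (fword F N a d) (fgen F N (a + 1 + d)) h1 h2
    rw [one_mul] at this
    simpa [fword] using this

lemma k_fword_last (a d i : ℕ) (hi : 1 ≤ i) (hi' : i ≤ N) (h : a + d + 1 = i) :
    kgen F N i * fword F N a d = qq F • (fword F N a d * kgen F N i) := by
  induction d with
  | zero =>
    have := k_mul_f' F N i a hi hi'
    rw [cartan_adj i a (by omega)] at this
    simpa [fword] using this
  | succ d ih =>
    have h1 : kgen F N i * fword F N a d = (1 : kk F) • (fword F N a d * kgen F N i) := by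
      rw [one_smul]; exact k_fword_comm F N a d i hi hi' (by omega)
    have h2 : kgen F N i * fgen F N (a + 1 + d) =
        qq F • (fgen F N (a + 1 + d) * kgen F N i) := by
      have := k_mul_f' F N i (a + 1 + d) hi hi'
      rw [cartan_adj i (a + 1 + d) (by omega)] at this
      simpa using this
    have := stepmul F N 1 (qq F) (kgen F N i) (fword F N a d) (fgen F N (a + 1 + d)) h1 h2
    rw [one_mul] at this
    simpa [fword] using this

end Aux2

lemma collect_aux {R M : Type*} [Field R] [AddCommGroup M] [Module R M]
    (t z w : R) (A B : M) (h : z - t = w) :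
    t • A - t • B - (t • A - z • B) = w • B := by
  rw [← h, sub_smul]; abel

/-- for `1 ≤ a < i ≤ N`:
`e_i f_{a,i+1} - f_{a,i+1} e_i = -q⁻¹ f_{a,i} k_i^{-2}` in `U`. -/
theorem stmt3 (F : Type) [Field F] (N : ℕ) (hN : 1 ≤ N) (a i : ℕ)
    (ha : 1 ≤ a) (hai : a < i) (hiN : i ≤ N) :
    egen F N i * fij F N a (i + 1) - fij F N a (i + 1) * egen F N i =
      (-(qq F)⁻¹) • (fij F N a i * (kinvgen F N i) ^ 2) := by
  have hq : qq F ≠ 0 := qne F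
  set X := fword F N a (i - a - 1) with hX
  set eE := egen F N i with heE
  set g := fgen F N i with hg
  set K := kgen F N i with hK
  set Ki := kinvgen F N i with hKi
  set c : kk F := (qq F ^ 2 - qq F ^ (-2 : ℤ))⁻¹ with hc
  have hfai : fij F N a i = X := rfl
  have hfij : fij F N a (i + 1) = qq F • (X * g) - (qq F)⁻¹ • (g * X) := by
    have hd : i + 1 - a - 1 = (i - a - 1) + 1 := by omega
    have hidx : a + 1 + (i - a - 1) = i := by omega
    rw [fij, hd]
    show fword F N a ((i - a - 1) + 1) = _
    rw [fword, hidx]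
  have heX : eE * X = X * eE := e_fword_comm F N a (i - a - 1) i (by omega) hiN (by omega)
  have hef : eE * g - g * eE = c • (K ^ 2 - Ki ^ 2) := ef_same' F N i (by omega) hiN
  have hKX : K * X = qq F • (X * K) :=
    k_fword_last F N a (i - a - 1) i (by omega) hiN (by omega)
  have hKiX : Ki * X = (qq F)⁻¹ • (X * Ki) :=
    kinv_fword_last F N a (i - a - 1) i (by omega) hiN (by omega)
  have hK2X : K ^ 2 * X = (qq F * qq F) • (X * K ^ 2) := by
    rw [pow_two, mul_assoc, hKX, mul_smul_comm, ← mul_assoc, hKX, smul_mul_assoc, smul_smul,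
      mul_assoc]
  have hKi2X : Ki ^ 2 * X = ((qq F)⁻¹ * (qq F)⁻¹) • (X * Ki ^ 2) := by
    rw [pow_two, mul_assoc, hKiX, mul_smul_comm, ← mul_assoc, hKiX, smul_mul_assoc, smul_smul,
      mul_assoc]
  have key1 : eE * (X * g) - (X * g) * eE = c • (X * K ^ 2) - c • (X * Ki ^ 2) := by
    have t1 : eE * (X * g) = X * (eE * g) := by rw [← mul_assoc, heX, mul_assoc]
    have t2 : (X * g) * eE = X * (g * eE) := by rw [mul_assoc]
    rw [t1, t2, ← mul_sub, hef, mul_smul_comm, mul_sub, smul_sub]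
  have key2 : eE * (g * X) - (g * X) * eE =
      c • ((qq F * qq F) • (X * K ^ 2)) - c • (((qq F)⁻¹ * (qq F)⁻¹) • (X * Ki ^ 2)) := by
    have t1 : eE * (g * X) = (eE * g) * X := by rw [mul_assoc]
    have t2 : (g * X) * eE = (g * eE) * X := by rw [mul_assoc, ← heX, ← mul_assoc]
    rw [t1, t2, ← sub_mul, hef, smul_mul_assoc, sub_mul, hK2X, hKi2X, smul_sub]
  have expand : eE * (qq F • (X * g) - (qq F)⁻¹ • (g * X)) -
      (qq F • (X * g) - (qq F)⁻¹ • (g * X)) * eE =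
      qq F • (eE * (X * g) - (X * g) * eE) - (qq F)⁻¹ • (eE * (g * X) - (g * X) * eE) := by
    rw [mul_sub, sub_mul, mul_smul_comm, mul_smul_comm, smul_mul_assoc, smul_mul_assoc,
      smul_sub, smul_sub]
    abel
  rw [hfij, hfai, expand, key1, key2]
  have hden : qq F ^ 2 - (qq F ^ 2)⁻¹ ≠ 0 := qden_ne F
  have hcval : c = (qq F ^ 2 - (qq F ^ 2)⁻¹)⁻¹ := by rw [hc, zpow_m2]
  rw [smul_sub, smul_sub, smul_smul, smul_smul, smul_smul, smul_smul, smul_smul, smul_smul]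
  have h4 : qq F ^ 4 - 1 ≠ 0 := sub_ne_zero.mpr (q4ne F)
  have hc2 : c = qq F ^ 2 / (qq F ^ 4 - 1) := by
    rw [hcval]
    rw [inv_eq_iff_eq_inv, eq_comm, inv_div]
    field_simp
  have s1 : (qq F)⁻¹ * c * (qq F * qq F) = qq F * c := by
    rw [hc2]; field_simp
  have s2 : (qq F)⁻¹ * c * ((qq F)⁻¹ * (qq F)⁻¹) - qq F * c = -(qq F)⁻¹ := by
    rw [hc2]; field_simp; ring
  rw [s1]
  exact collect_aux _ _ _ _ _ s2
end

section
/- Assume N ≥ 2. Let J ⊆ {1, …, N} with 1 ∈ J and N ∈ J, set F = f_N, J₁ = J ∪ {N+1} and J₂ = (J \ {N}) ∪ {N+1}. Then in U: F f_J - v f_J F = -q f_{J₂}, and f_J F = f_{J₁}. -/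
section Aux

lemma sort_insert_max {S : Finset ℕ} {b : ℕ} (h : ∀ x ∈ S, x < b) :
    (insert b S).sort (· ≤ ·) = S.sort (· ≤ ·) ++ [b] := by
  have hb : b ∉ S := fun hb => lt_irrefl b (h b hb)
  refine (fun p s1 s2 => List.Perm.eq_of_pairwise' (r := (· ≤ ·)) s1 s2 p) ?_ ?_ ?_
  · refine (Finset.sort_perm_toList _ _).trans ?_
    refine ((Finset.toList_insert hb).trans ?_).trans
      (List.perm_append_singleton b _).symm
    exact ((Finset.sort_perm_toList (s := S) _).symm.cons b)
  · exact Finset.pairwise_sort _ _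
  · refine List.pairwise_append.2 ⟨Finset.pairwise_sort _ _, List.pairwise_singleton _ _, ?_⟩
    intro a ha c hc
    rw [List.mem_singleton] at hc
    subst hc
    exact (h a ((Finset.mem_sort _).1 ha)).le

variable (F : Type) [Field F] (N : ℕ)

/-- `fList` of a list ending in two elements. -/
lemma fList_append_pair : ∀ (l : List ℕ) (a b : ℕ),
    fList F N (l ++ [a, b]) = fList F N (l ++ [a]) * fij F N a b
  | [], a, b => by simp [fList]
  | [x], a, b => by simp [fList, mul_assoc]
  | x :: y :: l, a, b => by
    have := fList_append_pair (y :: l) a b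
    simp only [List.cons_append, fList, List.append_eq] at this ⊢
    rw [this, mul_assoc]

/-- far commutation of generators -/
lemma fgen_comm_far {m : ℕ} (h : m + 2 ≤ N) :
    fgen F N N * fgen F N m = fgen F N m * fgen F N N := by
  rcases Nat.eq_zero_or_pos m with hm | hm
  · subst hm; simp [fgen]
  · have hN : 1 ≤ N := by omega
    rw [fgen, fgen, dif_pos ⟨hN, le_rfl⟩, dif_pos ⟨hm, by omega⟩]
    have hrel := RingQuot.mkAlgHom_rel (kk F)
      (UqRel.serre_f_far (F := F) (N := N) ⟨N - 1, by omega⟩ ⟨m - 1, by omega⟩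
        (Or.inr (by simp; omega)))
    simpa only [map_mul, gen] using hrel

/-- `fgen N` commutes with `fword i d` when all indices are ≤ N - 2. -/
lemma fgen_comm_fword : ∀ (d i : ℕ), i + d + 2 ≤ N →
    fgen F N N * fword F N i d = fword F N i d * fgen F N N
  | 0, i, h => fgen_comm_far F N (by omega)
  | d + 1, i, h => by
    have h1 := fgen_comm_fword d i (by omega)
    have h2 := fgen_comm_far F N (m := i + 1 + d) (by omega)
    rw [fword, mul_sub, sub_mul, mul_smul_comm, mul_smul_comm, smul_mul_assoc,
      smul_mul_assoc]
    congr 1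
    · rw [← mul_assoc, h1, mul_assoc, h2, ← mul_assoc]
    · rw [← mul_assoc, h2, mul_assoc, h1, ← mul_assoc]

lemma fgen_comm_fij {i j : ℕ} (hij : i < j) (h : j + 1 ≤ N) :
    fgen F N N * fij F N i j = fij F N i j * fgen F N N := by
  rw [fij]
  exact fgen_comm_fword F N _ _ (by omega)

lemma fgen_comm_fList : ∀ (l : List ℕ), l.Chain' (· < ·) → (∀ x ∈ l, x + 1 ≤ N) →
    fgen F N N * fList F N l = fList F N l * fgen F N N
  | [], _, _ => by simp [fList]
  | [x], _, _ => by simp [fList]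
  | a :: b :: l, hc, hm => by
    have hab : a < b := (List.isChain_cons_cons.1 hc).1
    have hrec := fgen_comm_fList (b :: l) (List.isChain_cons_cons.1 hc).2
      (fun x hx => hm x (List.mem_cons_of_mem a hx))
    have h1 := fgen_comm_fij F N hab (hm b (by simp))
    show fgen F N N * (fij F N a b * fList F N (b :: l)) =
      fij F N a b * fList F N (b :: l) * fgen F N N
    rw [← mul_assoc, h1, mul_assoc, hrec, ← mul_assoc]

end Aux


/-- assume `N ≥ 2`. Let `J ⊆ {1,…,N}` with `1, N ∈ J`, `F = f_N`,
`J₁ = J ∪ {N+1}`, `J₂ = (J \ {N}) ∪ {N+1}`. Then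
`F f_J - v f_J F = -q f_{J₂}` and `f_J F = f_{J₁}` in `U`. -/
theorem stmt17 (F : Type) [Field F] (N : ℕ) (hN : 2 ≤ N)
    (J : Finset ℕ) (hJ : J ⊆ Finset.Icc 1 N) (h1 : (1 : ℕ) ∈ J) (hNJ : N ∈ J) :
    (fgen F N N * fSet F N J - vv F • (fSet F N J * fgen F N N) =
      (-(qq F)) • fSet F N (insert (N + 1) (J.erase N))) ∧
    (fSet F N J * fgen F N N = fSet F N (insert (N + 1) J)) := by
  have hJ' : ∀ x ∈ J.erase N, x < N := fun x hx =>
    lt_of_le_of_ne ((Finset.mem_Icc.1 (hJ (Finset.mem_of_mem_erase hx))).2)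
      (Finset.ne_of_mem_erase hx)
  have hsJ : J.sort (· ≤ ·) = (J.erase N).sort (· ≤ ·) ++ [N] := by
    conv_lhs => rw [← Finset.insert_erase hNJ]
    exact sort_insert_max hJ'
  have h1' : (1 : ℕ) ∈ J.erase N := Finset.mem_erase.2 ⟨by omega, h1⟩
  obtain ⟨M, a, hMa⟩ : ∃ M a, (J.erase N).sort (· ≤ ·) = M ++ [a] := by
    rcases List.eq_nil_or_concat ((J.erase N).sort (· ≤ ·)) with h | ⟨M, a, h⟩
    · exfalso
      have h2 := (Finset.mem_sort (α := ℕ) (· ≤ ·)).2 h1'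
      rw [h] at h2; simp at h2
    · exact ⟨M, a, by rw [h, List.concat_eq_append]⟩
  have ha : a ∈ J.erase N := (Finset.mem_sort _).1 (by rw [hMa]; simp)
  have haN : a < N := hJ' a ha
  -- commutation of fgen N with the prefix
  have hPcomm : fgen F N N * fList F N ((J.erase N).sort (· ≤ ·)) =
      fList F N ((J.erase N).sort (· ≤ ·)) * fgen F N N :=
    fgen_comm_fList F N _ (List.Pairwise.isChain (Finset.sortedLT_sort _).pairwise)
      (fun x hx => hJ' x ((Finset.mem_sort _).1 hx))
  -- claim 2
  have c2 : fSet F N J * fgen F N N = fSet F N (insert (N + 1) J) := by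
    have hs1 : (insert (N + 1) J).sort (· ≤ ·) = (J.erase N).sort (· ≤ ·) ++ [N, N + 1] := by
      rw [sort_insert_max (fun x hx => by
        have := (Finset.mem_Icc.1 (hJ hx)).2; omega), hsJ, List.append_assoc]
      rfl
    have h0 : N + 1 - N - 1 = 0 := by omega
    rw [fSet, fSet, hs1, fList_append_pair, ← hsJ]
    congr 1
    rw [fij, h0]
    rfl
  refine ⟨?_, c2⟩
  -- claim 1
  have hsJ2 : J.sort (· ≤ ·) = M ++ [a, N] := by
    rw [hsJ, hMa, List.append_assoc]; rfl
  have hs2 : (insert (N + 1) (J.erase N)).sort (· ≤ ·) = M ++ [a, N + 1] := by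
    rw [sort_insert_max (fun x hx => by have := hJ' x hx; omega), hMa, List.append_assoc]
    rfl
  set W := fij F N a N with hWdef
  set P := fList F N (M ++ [a]) with hPdef
  have hfSetJ : fSet F N J = P * W := by rw [fSet, hsJ2, fList_append_pair]
  have hfSetJ2 : fSet F N (insert (N + 1) (J.erase N)) = P * fij F N a (N + 1) := by
    rw [fSet, hs2, fList_append_pair]
  have hPc : fgen F N N * P = P * fgen F N N := by rw [hPdef, ← hMa]; exact hPcomm
  have hW : fgen F N N * W - vv F • (W * fgen F N N) = (-(qq F)) • fij F N a (N + 1) := by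
    have hd : N + 1 - a - 1 = (N - a - 1) + 1 := by omega
    have he : a + 1 + (N - a - 1) = N := by omega
    have hW' : fij F N a (N + 1) =
        qq F • (W * fgen F N N) - (qq F)⁻¹ • (fgen F N N * W) := by
      rw [hWdef, fij, fij, hd, fword, he]
    rw [hW']
    have hq : qq F ≠ 0 := RatFunc.X_ne_zero
    rw [smul_sub, smul_smul, smul_smul,
      show -qq F * qq F = -vv F by rw [vv]; ring,
      show -qq F * (qq F)⁻¹ = -1 by field_simp,
      neg_smul, neg_smul, one_smul, sub_neg_eq_add]
    abel
  rw [hfSetJ, hfSetJ2, ← mul_assoc, hPc, mul_assoc, mul_assoc, ← mul_smul_comm,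
    ← mul_sub, hW, mul_smul_comm]
end
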